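/- Let β, α, μ₂, d₂ > 0, θ ∈ ℝ, c ∈ ℝ. Suppose S, I : ℝ → ℝ with I differentiable, I(ξ) ≥ 0 for all ξ, S(ξ) ≥ 0 for all ξ, and I satisfies cI'(ξ) = d₂𝔍[I](ξ) + βS(ξ)I(ξ)/(1 + αI(ξ)) − μ₂I(ξ) for all ξ ∈ ℝ. If I(ξ₀) = 0 for some ξ₀ ∈ ℝ, then I'(ξ₀) = 0 and I(ξ₀ + sin θ) = I(ξ₀ − sin θ) = I(ξ₀ + cos θ) = I(ξ₀ − cos θ) = 0. -/
import Mathlib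


/-- Discrete Laplacian in direction `θ`. -/
noncomputable def lap (θ : ℝ) (φ : ℝ → ℝ) (ξ : ℝ) : ℝ :=
  φ (ξ + Real.sin θ) + φ (ξ - Real.sin θ) + φ (ξ + Real.cos θ) + φ (ξ - Real.cos θ) - 4 * φ ξ

theorem stmt_12 (β α μ₂ d₂ θ c : ℝ)
    (hβ : 0 < β) (hα : 0 < α) (hμ₂ : 0 < μ₂) (hd₂ : 0 < d₂)
    (S I : ℝ → ℝ) (hIdiff : Differentiable ℝ I)
    (hIpos : ∀ ξ : ℝ, 0 ≤ I ξ) (hSpos : ∀ ξ : ℝ, 0 ≤ S ξ)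
    (hIeq : ∀ ξ : ℝ, c * deriv I ξ =
      d₂ * lap θ I ξ + β * S ξ * I ξ / (1 + α * I ξ) - μ₂ * I ξ)
    (ξ₀ : ℝ) (hξ₀ : I ξ₀ = 0) :
    deriv I ξ₀ = 0 ∧ I (ξ₀ + Real.sin θ) = 0 ∧ I (ξ₀ - Real.sin θ) = 0 ∧
      I (ξ₀ + Real.cos θ) = 0 ∧ I (ξ₀ - Real.cos θ) = 0 := by
  have hmin : IsLocalMin I ξ₀ := by
    apply Filter.Eventually.of_forall
    intro x; rw [hξ₀]; exact hIpos x
  have hderiv : deriv I ξ₀ = 0 := hmin.deriv_eq_zero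
  have heq := hIeq ξ₀
  rw [hderiv, hξ₀] at heq
  simp only [mul_zero, zero_mul, zero_div, add_zero, sub_zero, mul_zero] at heq
  have hlap : lap θ I ξ₀ = 0 := by
    have := heq.symm
    rcases mul_eq_zero.mp this with h | h
    · exact absurd h hd₂.ne'
    · exact h
  unfold lap at hlap
  rw [hξ₀] at hlap
  have h1 := hIpos (ξ₀ + Real.sin θ)
  have h2 := hIpos (ξ₀ - Real.sin θ)
  have h3 := hIpos (ξ₀ + Real.cos θ)
  have h4 := hIpos (ξ₀ - Real.cos θ)
  refine ⟨hderiv, ?_, ?_, ?_, ?_⟩ <;> linarith
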